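/- Let P be an irreducible transition matrix on a finite state space with invariant distribution π, and consider the stationary chain on the finite time interval {−N,…,N}. Then the finite-time forward committor q⁺_i(n) converges, as N → ∞ with n fixed, to the infinite-time stationary forward committor q⁺_i, and similarly q⁻_i(n) → q⁻_i; consequently the finite-time reactive distribution, reactive current, and rates converge to their stationary infinite-time counterparts: μ^{AB}_i(n) → q⁻_i π_i q⁺_i and f^{AB}_{ij}(n) → q⁻_i π_i P_{ij} q⁺_j. -/

import Mathlib

open Filter

section aux
variable {S : Type*} [Fintype S] [DecidableEq S]

lemma powEntryNonneg (R : Matrix S S ℝ) (h : ∀ i j, 0 ≤ R i j) :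
    ∀ m i j, 0 ≤ (R ^ m) i j := by
  intro m
  induction m with
  | zero =>
    intro i j
    simp only [pow_zero, Matrix.one_apply]
    split_ifs <;> norm_num
  | succ m ih =>
    intro i j
    rw [pow_succ, Matrix.mul_apply]
    exact Finset.sum_nonneg fun k _ => mul_nonneg (ih i k) (h k j)

lemma powRowSum (R : Matrix S S ℝ) (h : ∀ i, ∑ j, R i j = 1) :
    ∀ m i, ∑ j, (R ^ m) i j = 1 := by
  intro m
  induction m with
  | zero => intro i; simp [Matrix.one_apply]
  | succ m ih =>
    intro i
    simp only [pow_succ, Matrix.mul_apply]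
    rw [Finset.sum_comm]
    calc ∑ k, ∑ j, (R ^ m) i k * R k j = ∑ k, (R ^ m) i k * ∑ j, R k j := by
          simp [Finset.mul_sum]
      _ = 1 := by simp only [h, mul_one]; exact ih i

lemma powEntryLe (Q R : Matrix S S ℝ) (hQ : ∀ i j, 0 ≤ Q i j) (hR : ∀ i j, 0 ≤ R i j)
    (hle : ∀ i j, Q i j ≤ R i j) : ∀ m i j, (Q ^ m) i j ≤ (R ^ m) i j := by
  intro m
  induction m with
  | zero => intro i j; simp
  | succ m ih =>
    intro i j
    rw [pow_succ, pow_succ, Matrix.mul_apply, Matrix.mul_apply]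
    exact Finset.sum_le_sum fun k _ =>
      mul_le_mul (ih i k) (hle k j) (hQ k j) (powEntryNonneg R hR m i k)

lemma keyTendsto (R : Matrix S S ℝ) (hnn : ∀ i j, 0 ≤ R i j)
    (hrow : ∀ i, ∑ j, R i j = 1)
    (A B : Finset S)
    (hreach : ∀ i : S, ∃ m : ℕ, 0 < m ∧ ∃ b ∈ B, 0 < (R ^ m) i b)
    (q : S → ℝ)
    (hqC : ∀ i ∈ ((A∪B)ᶜ : Finset S), q i = ∑ j, R i j * q j)
    (hqA : ∀ i ∈ A, q i = 0) (hqB : ∀ i ∈ B, q i = 1)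
    (f : ℕ → ℤ → S → ℝ)
    (hfC : ∀ (N : ℕ) (n : ℤ), -(N:ℤ) ≤ n → n < N → ∀ i ∈ ((A∪B)ᶜ : Finset S),
       f N n i = ∑ j, R i j * f N (n+1) j)
    (hfA : ∀ (N : ℕ) (n : ℤ), -(N:ℤ) ≤ n → n ≤ N → ∀ i ∈ A, f N n i = 0)
    (hfB : ∀ (N : ℕ) (n : ℤ), -(N:ℤ) ≤ n → n ≤ N → ∀ i ∈ B, f N n i = 1)
    (hffin : ∀ N : ℕ, ∀ i ∈ ((A∪B)ᶜ : Finset S), f N (N:ℤ) i = 0)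
    (n : ℤ) (i : S) :
    Tendsto (fun N : ℕ => f N n i) atTop (nhds (q i)) := by
  classical
  have hNe : Nonempty S := ⟨i⟩
  set C : Finset S := (A ∪ B)ᶜ with hCdef
  set Q : Matrix S S ℝ := Matrix.of (fun a b => if a ∈ C ∧ b ∈ C then R a b else 0) with hQdef
  have hQapp : ∀ a b, Q a b = if a ∈ C ∧ b ∈ C then R a b else 0 := fun a b => rfl
  have hQnn : ∀ a b, 0 ≤ Q a b := by
    intro a b; rw [hQapp]; split_ifs; exacts [hnn a b, le_refl 0]
  have hQle : ∀ a b, Q a b ≤ R a b := by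
    intro a b; rw [hQapp]; split_ifs; exacts [le_refl _, hnn a b]
  -- row sums of powers of Q
  set w : ℕ → S → ℝ := fun m a => ∑ b, (Q ^ m) a b with hwdef
  have hw0 : ∀ a, w 0 a = 1 := by intro a; simp [hwdef, Matrix.one_apply]
  have hwnn : ∀ m a, 0 ≤ w m a := fun m a =>
    Finset.sum_nonneg fun b _ => powEntryNonneg Q hQnn m a b
  have hw1 : ∀ m a, w m a ≤ 1 := by
    intro m a
    calc w m a ≤ ∑ b, (R ^ m) a b :=
          Finset.sum_le_sum fun b _ => powEntryLe Q R hQnn hnn hQle m a b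
      _ = 1 := powRowSum R hrow m a
  have hwrec : ∀ m a, w (1 + m) a = ∑ b, Q a b * w m b := by
    intro m a
    simp only [hwdef, pow_add, pow_one, Matrix.mul_apply]
    rw [Finset.sum_comm]
    simp [Finset.mul_sum]
  have hwadd : ∀ m k a, w (m + k) a ≤ w m a := by
    intro m k a
    calc w (m + k) a = ∑ b, (Q ^ m) a b * w k b := by
          simp only [hwdef, pow_add, Matrix.mul_apply]
          rw [Finset.sum_comm]
          simp [Finset.mul_sum]
      _ ≤ ∑ b, (Q ^ m) a b * 1 :=
          Finset.sum_le_sum fun b _ =>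
            mul_le_mul_of_nonneg_left (hw1 k b) (powEntryNonneg Q hQnn m a b)
      _ = w m a := by simp [hwdef]
  -- each state escapes C
  have hesc : ∀ a : S, ∃ m : ℕ, 0 < m ∧ w m a < 1 := by
    intro a
    obtain ⟨m, hm, b, hbB, hpos⟩ := hreach a
    have hbC : b ∉ C := by
      simp only [hCdef, Finset.mem_compl, Finset.mem_union, not_not]
      exact Or.inr hbB
    have hQcol : ∀ k, 0 < k → ∀ x, (Q ^ k) x b = 0 := by
      intro k hk x
      obtain ⟨k', rfl⟩ := Nat.exists_eq_succ_of_ne_zero hk.ne'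
      rw [pow_succ, Matrix.mul_apply]
      apply Finset.sum_eq_zero
      intro y _
      have : Q y b = 0 := by rw [hQapp]; simp [hbC]
      simp [this]
    have h1 : w m a = ∑ c ∈ Finset.univ.erase b, (Q ^ m) a c := by
      show (∑ c : S, (Q ^ m) a c) = _
      rw [← Finset.add_sum_erase _ _ (Finset.mem_univ b), hQcol m hm a, zero_add]
    have h2 : ∑ c ∈ Finset.univ.erase b, (Q ^ m) a c
        ≤ ∑ c ∈ Finset.univ.erase b, (R ^ m) a c :=
      Finset.sum_le_sum fun c _ => powEntryLe Q R hQnn hnn hQle m a c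
    have h3 : ∑ c ∈ Finset.univ.erase b, (R ^ m) a c = 1 - (R ^ m) a b := by
      have := powRowSum R hrow m a
      rw [← Finset.add_sum_erase _ _ (Finset.mem_univ b)] at this
      linarith
    refine ⟨m, hm, ?_⟩
    rw [h1]
    calc ∑ c ∈ Finset.univ.erase b, (Q ^ m) a c ≤ 1 - (R ^ m) a b := by
          rw [← h3]; exact h2
      _ < 1 := by linarith
  choose g hg1 hg2 using hesc
  set M : ℕ := Finset.univ.sup g with hMdef
  have hM1 : 0 < M := lt_of_lt_of_le (hg1 i) (Finset.le_sup (Finset.mem_univ i))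
  have hwM : ∀ a, w M a < 1 := by
    intro a
    have hle : g a ≤ M := Finset.le_sup (Finset.mem_univ a)
    calc w M a = w (g a + (M - g a)) a := by rw [Nat.add_sub_cancel' hle]
      _ ≤ w (g a) a := hwadd _ _ a
      _ < 1 := hg2 a
  set θ : ℝ := Finset.univ.sup' Finset.univ_nonempty (fun a => w M a) with hθdef
  have hθ1 : θ < 1 := by
    rw [hθdef, Finset.sup'_lt_iff]
    exact fun a _ => hwM a
  have hθ0 : 0 ≤ θ := le_trans (hwnn M i) (Finset.le_sup' _ (Finset.mem_univ i))
  have hwθ : ∀ a, w M a ≤ θ := fun a => Finset.le_sup' _ (Finset.mem_univ a)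
  have hgeo : ∀ k a, w (M * k) a ≤ θ ^ k := by
    intro k
    induction k with
    | zero => intro a; simp [hw0]
    | succ k ih =>
      intro a
      have : M * (k + 1) = M + M * k := by ring
      rw [this]
      calc w (M + M * k) a = ∑ b, (Q ^ M) a b * w (M * k) b := by
            simp only [hwdef, pow_add, Matrix.mul_apply]
            rw [Finset.sum_comm]
            simp [Finset.mul_sum]
        _ ≤ ∑ b, (Q ^ M) a b * θ ^ k :=
            Finset.sum_le_sum fun b _ =>
              mul_le_mul_of_nonneg_left (ih b) (powEntryNonneg Q hQnn M a b)
        _ = w M a * θ ^ k := by rw [← Finset.sum_mul]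
        _ ≤ θ * θ ^ k := mul_le_mul_of_nonneg_right (hwθ a) (pow_nonneg hθ0 k)
        _ = θ ^ (k + 1) := (pow_succ' θ k).symm
  have hwbound : ∀ k a, w k a ≤ θ ^ (k / M) := by
    intro k a
    calc w k a = w (M * (k / M) + k % M) a := by rw [Nat.div_add_mod]
      _ ≤ w (M * (k / M)) a := hwadd _ _ a
      _ ≤ θ ^ (k / M) := hgeo _ a
  -- bound on q
  set Mq : ℝ := ∑ j, |q j| with hMqdef
  have hMq : ∀ j, |q j| ≤ Mq :=
    fun j => Finset.single_le_sum (fun c _ => abs_nonneg (q c)) (Finset.mem_univ j)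
  have hMqnn : 0 ≤ Mq := le_trans (abs_nonneg _) (hMq i)
  -- main error bound by induction
  have main : ∀ (k : ℕ) (N : ℕ), (k : ℤ) ≤ 2 * N →
      ∀ j, |f N ((N : ℤ) - k) j - q j| ≤ w k j * Mq := by
    intro k
    induction k with
    | zero =>
      intro N _ j
      simp only [Nat.cast_zero, sub_zero]
      by_cases hjA : j ∈ A
      · rw [hfA N N (by omega) (by omega) j hjA, hqA j hjA]
        simp [hw0, hMqnn]
      by_cases hjB : j ∈ B
      · rw [hfB N N (by omega) (by omega) j hjB, hqB j hjB]
        simp [hw0, hMqnn]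
      have hjC : j ∈ C := by
        simp [hCdef, Finset.mem_compl, Finset.mem_union, hjA, hjB]
      rw [hffin N j hjC]
      simp only [Nat.cast_zero, sub_zero, zero_sub, abs_neg]
      rw [hw0, one_mul]
      exact hMq j
    | succ k ih =>
      intro N hk j
      have hk' : (k : ℤ) ≤ 2 * N := by push_cast at hk ⊢; omega
      have hn1 : -(N : ℤ) ≤ (N : ℤ) - (k + 1 : ℕ) := by push_cast at hk ⊢; omega
      have hn2 : (N : ℤ) - (k + 1 : ℕ) < N := by push_cast; omega
      by_cases hjA : j ∈ A
      · rw [hfA N _ hn1 (le_of_lt hn2) j hjA, hqA j hjA]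
        simpa using mul_nonneg (hwnn (k+1) j) hMqnn
      by_cases hjB : j ∈ B
      · rw [hfB N _ hn1 (le_of_lt hn2) j hjB, hqB j hjB]
        simpa using mul_nonneg (hwnn (k+1) j) hMqnn
      have hjC : j ∈ C := by
        simp [hCdef, Finset.mem_compl, Finset.mem_union, hjA, hjB]
      have hn3 : -(N : ℤ) ≤ (N : ℤ) - (k : ℕ) := by push_cast at hk ⊢; omega
      have hn4 : (N : ℤ) - (k : ℕ) ≤ N := by push_cast; omega
      have hstep : ((N : ℤ) - (k + 1 : ℕ)) + 1 = (N : ℤ) - (k : ℕ) := by push_cast; ring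
      have hzero : ∀ l, l ∉ C → f N ((N : ℤ) - (k : ℕ)) l - q l = 0 := by
        intro l hlC
        have hl : l ∈ A ∨ l ∈ B := by
          by_contra hcon
          push_neg at hcon
          exact hlC (by simp [hCdef, Finset.mem_compl, Finset.mem_union, hcon.1, hcon.2])
        rcases hl with hl | hl
        · rw [hfA N _ hn3 hn4 l hl, hqA l hl]; ring
        · rw [hfB N _ hn3 hn4 l hl, hqB l hl]; ring
      have hd : ∀ l, |f N ((N : ℤ) - (k : ℕ)) l - q l| ≤ w k l * Mq := ih N hk'
      rw [hfC N _ hn1 hn2 j hjC, hstep, hqC j hjC, ← Finset.sum_sub_distrib]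
      calc |∑ l, (R j l * f N ((N : ℤ) - (k : ℕ)) l - R j l * q l)|
          = |∑ l, Q j l * (f N ((N : ℤ) - (k : ℕ)) l - q l)| := by
            congr 1
            refine Finset.sum_congr rfl fun l _ => ?_
            by_cases hlC : l ∈ C
            · rw [hQapp]; simp only [hjC, hlC, and_self, if_true]; ring
            · have h0 := hzero l hlC
              have h0' : f N ((N : ℤ) - (k : ℕ)) l = q l := by linarith
              rw [hQapp, h0']
              simp [hlC]
        _ ≤ ∑ l, |Q j l * (f N ((N : ℤ) - (k : ℕ)) l - q l)| :=
            Finset.abs_sum_le_sum_abs _ _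
        _ = ∑ l, Q j l * |f N ((N : ℤ) - (k : ℕ)) l - q l| := by
            refine Finset.sum_congr rfl fun l _ => ?_
            rw [abs_mul, abs_of_nonneg (hQnn j l)]
        _ ≤ ∑ l, Q j l * (w k l * Mq) :=
            Finset.sum_le_sum fun l _ =>
              mul_le_mul_of_nonneg_left (hd l) (hQnn j l)
        _ = (∑ l, Q j l * w k l) * Mq := by
            rw [Finset.sum_mul]
            exact Finset.sum_congr rfl fun l _ => (mul_assoc _ _ _).symm
        _ = w (k + 1) j * Mq := by
            have h := hwrec k j
            rw [Nat.add_comm 1 k] at h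
            rw [h]
  -- conclude
  rw [tendsto_iff_norm_sub_tendsto_zero]
  simp only [Real.norm_eq_abs]
  apply squeeze_zero' (Eventually.of_forall fun N => abs_nonneg _)
    (g := fun N : ℕ => Mq * θ ^ (((N : ℤ) - n).toNat / M))
  · refine eventually_atTop.2 ⟨n.toNat + (-n).toNat + 1, fun N hN => ?_⟩
    set k : ℕ := ((N : ℤ) - n).toNat with hkdef
    have hkc : (k : ℤ) = (N : ℤ) - n := by
      rw [hkdef]; rw [Int.toNat_of_nonneg]; omega
    have hkk : (N : ℤ) - (k : ℕ) = n := by omega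
    have h2 : (k : ℤ) ≤ 2 * N := by omega
    calc |f N n i - q i| = |f N ((N : ℤ) - (k : ℕ)) i - q i| := by rw [hkk]
      _ ≤ w k i * Mq := main k N h2 i
      _ ≤ θ ^ (k / M) * Mq := mul_le_mul_of_nonneg_right (hwbound k i) hMqnn
      _ = Mq * θ ^ (k / M) := mul_comm _ _
  · have t1 : Tendsto (fun N : ℕ => ((N : ℤ) - n).toNat) atTop atTop :=
      tendsto_atTop_atTop.mpr fun b => ⟨b + n.toNat, fun N hN => by omega⟩
    have t2 : Tendsto (fun k : ℕ => k / M) atTop atTop :=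
      tendsto_atTop_atTop.mpr fun b => ⟨b * M, fun k hk => (Nat.le_div_iff_mul_le hM1).mpr hk⟩
    have t3 : Tendsto (fun k : ℕ => θ ^ k) atTop (nhds 0) :=
      tendsto_pow_atTop_nhds_zero_of_lt_one hθ0 hθ1
    have := (t3.comp (t2.comp t1)).const_mul Mq
    simpa using this
end aux

/-- **Convergence of finite-time TPT to stationary infinite-time TPT.**
Let `P` be an irreducible row-stochastic matrix with positive invariant distribution
`π`, and consider, for each horizon `N`, the stationary chain on `{−N, …, N}`.  Let
`qf N` and `qb N` be the finite-time forward and backward committors (characterized by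
their iterative systems with final condition at time `N`, resp. initial condition at
time `−N`) and let `qp`, `qm` be the infinite-time committors (solving the stationary
committor systems).  Then, for every fixed time `n` and states `i, j`, as `N → ∞`:
`qf N n i → qp i`, `qb N n i → qm i`, the reactive distribution
`μ^{AB}_i(n) = qb N n i ⬝ π i ⬝ qf N n i → qm i ⬝ π i ⬝ qp i`, the reactive current
`f^{AB}_{ij}(n) → qm i ⬝ π i ⬝ P i j ⬝ qp j`, and the discrete rates out of `A` and
into `B` converge to their stationary counterparts. -/
theorem stmt18
    {S : Type*} [Fintype S] [DecidableEq S]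
    (P : Matrix S S ℝ) (π : S → ℝ)
    (hnonneg : ∀ i j, 0 ≤ P i j)
    (hrow : ∀ i, ∑ j : S, P i j = 1)
    (hirr : ∀ i j : S, ∃ m : ℕ, 0 < m ∧ 0 < (P ^ m) i j)
    (hπpos : ∀ i, 0 < π i)
    (hπsum : ∑ i : S, π i = 1)
    (hinv : ∀ j, ∑ i : S, π i * P i j = π j)
    (A B : Finset S) (hA : A.Nonempty) (hB : B.Nonempty) (hAB : Disjoint A B)
    -- infinite-time committors
    (qp qm : S → ℝ)
    (hqpC : ∀ i ∈ ((A ∪ B)ᶜ : Finset S), qp i = ∑ j : S, P i j * qp j)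
    (hqpA : ∀ i ∈ A, qp i = 0) (hqpB : ∀ i ∈ B, qp i = 1)
    (hqmC : ∀ i ∈ ((A ∪ B)ᶜ : Finset S),
      qm i = ∑ j : S, (π j / π i * P j i) * qm j)
    (hqmA : ∀ i ∈ A, qm i = 1) (hqmB : ∀ i ∈ B, qm i = 0)
    -- finite-time forward committors on {−N, …, N}
    (qf : ℕ → ℤ → S → ℝ)
    (hqfC : ∀ (N : ℕ) (n : ℤ), -(N : ℤ) ≤ n → n < N →
      ∀ i ∈ ((A ∪ B)ᶜ : Finset S), qf N n i = ∑ j : S, P i j * qf N (n + 1) j)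
    (hqfA : ∀ (N : ℕ) (n : ℤ), -(N : ℤ) ≤ n → n ≤ N → ∀ i ∈ A, qf N n i = 0)
    (hqfB : ∀ (N : ℕ) (n : ℤ), -(N : ℤ) ≤ n → n ≤ N → ∀ i ∈ B, qf N n i = 1)
    (hqffin : ∀ N : ℕ, ∀ i ∈ ((A ∪ B)ᶜ : Finset S), qf N (N : ℤ) i = 0)
    -- finite-time backward committors on {−N, …, N}
    (qb : ℕ → ℤ → S → ℝ)
    (hqbC : ∀ (N : ℕ) (n : ℤ), -(N : ℤ) < n → n ≤ N →
      ∀ i ∈ ((A ∪ B)ᶜ : Finset S),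
        qb N n i = ∑ j : S, (π j / π i * P j i) * qb N (n - 1) j)
    (hqbA : ∀ (N : ℕ) (n : ℤ), -(N : ℤ) ≤ n → n ≤ N → ∀ i ∈ A, qb N n i = 1)
    (hqbB : ∀ (N : ℕ) (n : ℤ), -(N : ℤ) ≤ n → n ≤ N → ∀ i ∈ B, qb N n i = 0)
    (hqbinit : ∀ N : ℕ, ∀ i ∈ ((A ∪ B)ᶜ : Finset S), qb N (-(N : ℤ)) i = 0) :
    -- convergence of the committors
    (∀ (n : ℤ) (i : S), Tendsto (fun N : ℕ => qf N n i) atTop (nhds (qp i))) ∧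
    (∀ (n : ℤ) (i : S), Tendsto (fun N : ℕ => qb N n i) atTop (nhds (qm i))) ∧
    -- convergence of the reactive distribution
    (∀ (n : ℤ) (i : S),
      Tendsto (fun N : ℕ => qb N n i * π i * qf N n i) atTop
        (nhds (qm i * π i * qp i))) ∧
    -- convergence of the reactive current
    (∀ (n : ℤ) (i j : S),
      Tendsto (fun N : ℕ => qb N n i * π i * P i j * qf N (n + 1) j) atTop
        (nhds (qm i * π i * P i j * qp j))) ∧
    -- convergence of the discrete rates
    (∀ n : ℤ,
      Tendsto (fun N : ℕ => ∑ i ∈ A, ∑ j : S, qb N n i * π i * P i j * qf N (n + 1) j)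
        atTop (nhds (∑ i ∈ A, ∑ j : S, qm i * π i * P i j * qp j))) ∧
    (∀ n : ℤ,
      Tendsto (fun N : ℕ =>
          ∑ i : S, ∑ j ∈ B, qb N (n - 1) i * π i * P i j * qf N n j)
        atTop (nhds (∑ i : S, ∑ j ∈ B, qm i * π i * P i j * qp j))) := by
  classical
  -- forward convergence
  have hf : ∀ (n : ℤ) (i : S), Tendsto (fun N : ℕ => qf N n i) atTop (nhds (qp i)) := by
    intro n i
    refine keyTendsto P hnonneg hrow A B ?_ qp hqpC hqpA hqpB qf hqfC hqfA hqfB hqffin n i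
    intro a
    obtain ⟨b, hb⟩ := hB
    obtain ⟨m, hm, hp⟩ := hirr a b
    exact ⟨m, hm, b, hb, hp⟩
  -- reverse matrix
  set Pm : Matrix S S ℝ := Matrix.of (fun i j => π j / π i * P j i) with hPmdef
  have hPmapp : ∀ i j, Pm i j = π j / π i * P j i := fun i j => rfl
  have hPmnn : ∀ i j, 0 ≤ Pm i j := by
    intro i j
    rw [hPmapp]
    exact mul_nonneg (div_nonneg (hπpos j).le (hπpos i).le) (hnonneg j i)
  have hPmrow : ∀ i, ∑ j, Pm i j = 1 := by
    intro i
    have : ∀ j : S, Pm i j = π j * P j i / π i := by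
      intro j; rw [hPmapp]; ring
    rw [Finset.sum_congr rfl fun j _ => this j, ← Finset.sum_div, hinv i,
      div_self (hπpos i).ne']
  have hPmpow : ∀ m i j, (Pm ^ m) i j = π j / π i * (P ^ m) j i := by
    intro m
    induction m with
    | zero =>
      intro i j
      simp only [pow_zero, Matrix.one_apply]
      by_cases h : i = j
      · subst h; simp [div_self (hπpos i).ne']
      · simp [h, Ne.symm h]
    | succ m ih =>
      intro i j
      rw [pow_succ, Matrix.mul_apply, pow_succ']
      rw [Matrix.mul_apply, Finset.mul_sum]
      refine Finset.sum_congr rfl fun k _ => ?_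
      rw [ih i k, hPmapp]
      have hk := (hπpos k).ne'
      field_simp
  have hbk : ∀ (n : ℤ) (i : S), Tendsto (fun N : ℕ => qb N (-n) i) atTop (nhds (qm i)) := by
    intro n i
    refine keyTendsto Pm hPmnn hPmrow B A ?_ qm ?_ hqmB hqmA
      (fun N k i => qb N (-k) i) ?_ ?_ ?_ ?_ n i
    · intro a
      obtain ⟨b, hb⟩ := hA
      obtain ⟨m, hm, hp⟩ := hirr b a
      refine ⟨m, hm, b, hb, ?_⟩
      rw [hPmpow]
      exact mul_pos (div_pos (hπpos b) (hπpos a)) hp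
    · intro c hc
      rw [Finset.union_comm] at hc
      exact hqmC c hc
    · intro N k hk1 hk2 c hc
      rw [Finset.union_comm] at hc
      have h := hqbC N (-k) (by omega) (by omega) c hc
      have h2 : (-k - 1 : ℤ) = -(k + 1) := by ring
      rw [h2] at h
      exact h
    · intro N k hk1 hk2 c hc
      exact hqbB N (-k) (by omega) (by omega) c hc
    · intro N k hk1 hk2 c hc
      exact hqbA N (-k) (by omega) (by omega) c hc
    · intro N c hc
      rw [Finset.union_comm] at hc
      exact hqbinit N c hc
  have hbc : ∀ (n : ℤ) (i : S), Tendsto (fun N : ℕ => qb N n i) atTop (nhds (qm i)) := by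
    intro n i
    have := hbk (-n) i
    simpa using this
  refine ⟨hf, hbc, ?_, ?_, ?_, ?_⟩
  · intro n i
    exact ((hbc n i).mul tendsto_const_nhds).mul (hf n i)
  · intro n i j
    exact (((hbc n i).mul tendsto_const_nhds).mul tendsto_const_nhds).mul (hf (n + 1) j)
  · intro n
    exact tendsto_finset_sum _ fun i _ => tendsto_finset_sum _ fun j _ =>
      (((hbc n i).mul tendsto_const_nhds).mul tendsto_const_nhds).mul (hf (n + 1) j)
  · intro n
    exact tendsto_finset_sum _ fun i _ => tendsto_finset_sum _ fun j _ =>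
      (((hbc (n - 1) i).mul tendsto_const_nhds).mul tendsto_const_nhds).mul (hf n j)
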